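/- The fixed-point algebra R = (k[x,y]/(x³,y³))^{C₂} in characteristic 3 (with the inversion-type action x ↦ x²+2x, y ↦ y²+2y) is a symmetric k-algebra: the linear form s with s(x²y²) = 1 and s = 0 on the other basis elements {1, x², y², xy+x²y+xy²} has kernel containing no nonzero ideal of R. -/

import Mathlib

open MvPolynomial

variable (k : Type*) [Field k]

/-- The local commutative algebra `Q = k[x,y]/(x³, y³)`. -/
abbrev Qalg := MvPolynomial (Fin 2) k ⧸
  Ideal.span {(X 0 : MvPolynomial (Fin 2) k) ^ 3, X 1 ^ 3}

/-- The image of `x` in `Q`. -/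
noncomputable def qx : Qalg k := Ideal.Quotient.mk _ (X 0)
/-- The image of `y` in `Q`. -/
noncomputable def qy : Qalg k := Ideal.Quotient.mk _ (X 1)

/-- The fixed-point subalgebra `R = Q^{C₂}` of the order-2 automorphism `t` of `Q`
(determined by `t(x) = x² + 2x`, `t(y) = y² + 2y`). -/
noncomputable def Req (t : Qalg k →ₐ[k] Qalg k) : Subalgebra k (Qalg k) :=
  AlgHom.equalizer t (AlgHom.id k (Qalg k))

/-- The Jacobson radical of `R`. -/
noncomputable def Jeq (t : Qalg k →ₐ[k] Qalg k) : Ideal ↥(Req k t) :=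
  (⊥ : Ideal ↥(Req k t)).jacobson

-- auxiliary
noncomputable def mymono (i j : ℕ) : Fin 2 →₀ ℕ := Finsupp.single 0 i + Finsupp.single 1 j

@[simp] lemma mymono_apply0 (i j : ℕ) : mymono i j 0 = i := by
  simp [mymono, Finsupp.single_apply]

@[simp] lemma mymono_apply1 (i j : ℕ) : mymono i j 1 = j := by
  simp [mymono, Finsupp.single_apply]

lemma eq_mymono (u : Fin 2 →₀ ℕ) : u = mymono (u 0) (u 1) := by
  ext x
  fin_cases x <;> simp

lemma mymono_eq_iff {a b i j : ℕ} : mymono a b = mymono i j ↔ a = i ∧ b = j := by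
  constructor
  · intro h
    constructor
    · have := congrArg (fun f : Fin 2 →₀ ℕ => f 0) h; simpa using this
    · have := congrArg (fun f : Fin 2 →₀ ℕ => f 1) h; simpa using this
  · rintro ⟨rfl, rfl⟩; rfl

noncomputable def coeffL (m : Fin 2 →₀ ℕ) : MvPolynomial (Fin 2) k →ₗ[k] k where
  toFun := coeff m
  map_add' p q := coeff_add m p q
  map_smul' c p := by simp [coeff_smul]

lemma coeff_vanish (m : Fin 2 →₀ ℕ) (h0 : m 0 < 3) (h1 : m 1 < 3) :
    ∀ z ∈ Ideal.span {(X 0 : MvPolynomial (Fin 2) k) ^ 3, X 1 ^ 3}, coeff m z = 0 := by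
  intro z hz
  rw [Ideal.mem_span_pair] at hz
  obtain ⟨p, q, rfl⟩ := hz
  rw [coeff_add, X_pow_eq_monomial, X_pow_eq_monomial, coeff_mul_monomial',
    coeff_mul_monomial', if_neg, if_neg, add_zero]
  · rw [Finsupp.single_le_iff]; omega
  · rw [Finsupp.single_le_iff]; omega

noncomputable def cQ (i j : ℕ) (hi : i < 3) (hj : j < 3) : Qalg k →ₗ[k] k :=
  (Submodule.liftQ
      ((Ideal.span {(X 0 : MvPolynomial (Fin 2) k) ^ 3, X 1 ^ 3}).restrictScalars k)
      (coeffL k (mymono i j))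
      (fun z hz => coeff_vanish k (mymono i j) (by simpa using hi) (by simpa using hj) z hz)) ∘ₗ
  (Submodule.Quotient.restrictScalarsEquiv k
      (Ideal.span {(X 0 : MvPolynomial (Fin 2) k) ^ 3, X 1 ^ 3})).symm.toLinearMap

lemma cQ_mk (i j : ℕ) (hi : i < 3) (hj : j < 3) (p : MvPolynomial (Fin 2) k) :
    cQ k i j hi hj (Ideal.Quotient.mk _ p) = coeff (mymono i j) p := by
  simp [cQ, ← Ideal.Quotient.mk_eq_mk, coeffL]

set_option synthInstance.maxHeartbeats 1000000
set_option maxHeartbeats 1000000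

lemma mymono_add_single (a b' : ℕ) : mymono a b' + Finsupp.single 1 3 = mymono a (b' + 3) := by
  rw [mymono, mymono, add_assoc, ← Finsupp.single_add]

lemma mymono_add_single0 (a' b : ℕ) : mymono a' b + Finsupp.single 0 3 = mymono (a' + 3) b := by
  rw [mymono, mymono, add_right_comm, ← Finsupp.single_add]

lemma mk_monomial (a b : ℕ) (c : k) :
    Ideal.Quotient.mk (Ideal.span {(X 0 : MvPolynomial (Fin 2) k) ^ 3, X 1 ^ 3})
      (monomial (mymono a b) c) = algebraMap k (Qalg k) c * (qx k ^ a * qy k ^ b) := by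
  have h1 : (monomial (mymono a b) c : MvPolynomial (Fin 2) k)
      = C c * X 0 ^ a * X 1 ^ b := by
    rw [X_pow_eq_monomial, X_pow_eq_monomial, mul_assoc, monomial_mul, C_mul_monomial,
      mul_one, mul_one, mymono]
  have hC : Ideal.Quotient.mk (Ideal.span {(X 0 : MvPolynomial (Fin 2) k) ^ 3, X 1 ^ 3})
      (C c) = algebraMap k (Qalg k) c := by
    rw [IsScalarTower.algebraMap_eq k (MvPolynomial (Fin 2) k) (Qalg k),
      Ideal.Quotient.algebraMap_eq]
    simp [MvPolynomial.algebraMap_eq]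
  rw [h1, map_mul, map_mul, map_pow, map_pow, hC, qx, qy, mul_assoc]

lemma cQ_basis (i j a b : ℕ) (hi : i < 3) (hj : j < 3) :
    cQ k i j hi hj (qx k ^ a * qy k ^ b) = if a = i ∧ b = j then 1 else 0 := by
  have h : qx k ^ a * qy k ^ b
      = Ideal.Quotient.mk _ (monomial (mymono a b) (1 : k)) := by
    rw [mk_monomial, map_one, one_mul]
  rw [h, cQ_mk, coeff_monomial]
  by_cases h2 : a = i ∧ b = j
  · rw [if_pos (mymono_eq_iff.2 h2), if_pos h2]
  · rw [if_neg (fun hh => h2 (mymono_eq_iff.1 hh)), if_neg h2]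

lemma cQ_amul (i j : ℕ) (hi : i < 3) (hj : j < 3) (c : k) (v : Qalg k) :
    cQ k i j hi hj (algebraMap k (Qalg k) c * v) = c * cQ k i j hi hj v := by
  rw [← Algebra.smul_def, map_smul, smul_eq_mul]

lemma trunc (p : MvPolynomial (Fin 2) k) :
    Ideal.Quotient.mk (Ideal.span {(X 0 : MvPolynomial (Fin 2) k) ^ 3, X 1 ^ 3}) p
      = ∑ ij ∈ Finset.range 3 ×ˢ Finset.range 3,
          algebraMap k (Qalg k) (coeff (mymono ij.1 ij.2) p) * (qx k ^ ij.1 * qy k ^ ij.2) := by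
  induction p using MvPolynomial.induction_on' with
  | monomial u c =>
    obtain ⟨a, b, rfl⟩ : ∃ a b, u = mymono a b := ⟨u 0, u 1, eq_mymono u⟩
    by_cases hu : a < 3 ∧ b < 3
    · rw [Finset.sum_eq_single (a, b)]
      · rw [coeff_monomial, if_pos rfl, mk_monomial]
      · rintro ⟨i, j⟩ hmem hne
        rw [coeff_monomial, if_neg, map_zero, zero_mul]
        intro h
        obtain ⟨h1, h2⟩ := mymono_eq_iff.1 h
        exact hne (by rw [Prod.mk.injEq]; exact ⟨h1.symm, h2.symm⟩)
      · intro hmem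
        exact absurd (Finset.mem_product.2
          ⟨Finset.mem_range.2 hu.1, Finset.mem_range.2 hu.2⟩) hmem
    · have hmem : (monomial (mymono a b) c : MvPolynomial (Fin 2) k)
          ∈ Ideal.span {(X 0 : MvPolynomial (Fin 2) k) ^ 3, X 1 ^ 3} := by
        rw [Ideal.mem_span_pair]
        rcases Nat.lt_or_ge a 3 with h0 | h0
        · have hb3 : 3 ≤ b := by omega
          refine ⟨0, monomial (mymono a (b - 3)) c, ?_⟩
          rw [zero_mul, zero_add, X_pow_eq_monomial, monomial_mul, mul_one,
            mymono_add_single, Nat.sub_add_cancel hb3]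
        · refine ⟨monomial (mymono (a - 3) b) c, 0, ?_⟩
          rw [zero_mul, add_zero, X_pow_eq_monomial, monomial_mul, mul_one,
            mymono_add_single0, Nat.sub_add_cancel h0]
      rw [Ideal.Quotient.eq_zero_iff_mem.2 hmem]
      rw [eq_comm]
      apply Finset.sum_eq_zero
      rintro ⟨i, j⟩ hij
      rw [coeff_monomial, if_neg, map_zero, zero_mul]
      intro h
      rw [Finset.mem_product, Finset.mem_range, Finset.mem_range] at hij
      obtain ⟨h1, h2⟩ := mymono_eq_iff.1 h
      omega
  | add p q hp hq =>
    rw [map_add, hp, hq, ← Finset.sum_add_distrib]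
    exact Finset.sum_congr rfl (fun ij _ => by rw [coeff_add, map_add, add_mul])

set_option synthInstance.maxHeartbeats 1000000 in
set_option maxHeartbeats 10000000 in
theorem stmt16_aux [CharP k 3] (t : Qalg k →ₐ[k] Qalg k)
    (ht0 : t (qx k) = qx k ^ 2 + 2 * qx k) (ht1 : t (qy k) = qy k ^ 2 + 2 * qy k)
    (hx2 : qx k ^ 2 ∈ Req k t) (hy2 : qy k ^ 2 ∈ Req k t)
    (hmix : qx k * qy k + qx k ^ 2 * qy k + qx k * qy k ^ 2 ∈ Req k t)
    (hx2y2 : qx k ^ 2 * qy k ^ 2 ∈ Req k t)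
    (s : ↥(Req k t) →ₗ[k] k)
    (h1 : s (⟨qx k ^ 2 * qy k ^ 2, hx2y2⟩ : ↥(Req k t)) = 1)
    (h2 : s 1 = 0)
    (h3 : s (⟨qx k ^ 2, hx2⟩ : ↥(Req k t)) = 0)
    (h4 : s (⟨qy k ^ 2, hy2⟩ : ↥(Req k t)) = 0)
    (h5 : s (⟨qx k * qy k + qx k ^ 2 * qy k + qx k * qy k ^ 2, hmix⟩ : ↥(Req k t)) = 0) :
    ∀ I : Ideal ↥(Req k t), (∀ a ∈ I, s a = 0) → I = ⊥ := by
  classical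
  intro I hI
  have hx3 : qx k ^ 3 = 0 := by
    rw [qx, ← map_pow, Ideal.Quotient.eq_zero_iff_mem]
    exact Ideal.subset_span (Set.mem_insert _ _)
  have hy3 : qy k ^ 3 = 0 := by
    rw [qy, ← map_pow, Ideal.Quotient.eq_zero_iff_mem]
    exact Ideal.subset_span (Set.mem_insert_of_mem _ rfl)
  have h3k : (3 : k) = 0 := by exact_mod_cast CharP.cast_eq_zero k 3
  have h3Q : (3 : Qalg k) = 0 := by
    rw [← map_ofNat (algebraMap k (Qalg k)) 3, h3k, map_zero]
  rw [eq_bot_iff]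
  intro a ha
  rw [Ideal.mem_bot]
  obtain ⟨p, hp⟩ := Ideal.Quotient.mk_surjective (a : Qalg k)
  obtain ⟨c, hdec⟩ : ∃ c : ℕ → ℕ → k, (a : Qalg k) =
      algebraMap k (Qalg k) (c 0 0) * (qx k ^ 0 * qy k ^ 0)
      + algebraMap k (Qalg k) (c 0 1) * (qx k ^ 0 * qy k ^ 1)
      + algebraMap k (Qalg k) (c 0 2) * (qx k ^ 0 * qy k ^ 2)
      + algebraMap k (Qalg k) (c 1 0) * (qx k ^ 1 * qy k ^ 0)
      + algebraMap k (Qalg k) (c 1 1) * (qx k ^ 1 * qy k ^ 1)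
      + algebraMap k (Qalg k) (c 1 2) * (qx k ^ 1 * qy k ^ 2)
      + algebraMap k (Qalg k) (c 2 0) * (qx k ^ 2 * qy k ^ 0)
      + algebraMap k (Qalg k) (c 2 1) * (qx k ^ 2 * qy k ^ 1)
      + algebraMap k (Qalg k) (c 2 2) * (qx k ^ 2 * qy k ^ 2) := by
    refine ⟨fun i j => coeff (mymono i j) p, ?_⟩
    have h9 : (a : Qalg k) =
        algebraMap k (Qalg k) (coeff (mymono 0 0) p) * (qx k ^ 0 * qy k ^ 0)
      + algebraMap k (Qalg k) (coeff (mymono 0 1) p) * (qx k ^ 0 * qy k ^ 1)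
      + algebraMap k (Qalg k) (coeff (mymono 0 2) p) * (qx k ^ 0 * qy k ^ 2)
      + algebraMap k (Qalg k) (coeff (mymono 1 0) p) * (qx k ^ 1 * qy k ^ 0)
      + algebraMap k (Qalg k) (coeff (mymono 1 1) p) * (qx k ^ 1 * qy k ^ 1)
      + algebraMap k (Qalg k) (coeff (mymono 1 2) p) * (qx k ^ 1 * qy k ^ 2)
      + algebraMap k (Qalg k) (coeff (mymono 2 0) p) * (qx k ^ 2 * qy k ^ 0)
      + algebraMap k (Qalg k) (coeff (mymono 2 1) p) * (qx k ^ 2 * qy k ^ 1)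
      + algebraMap k (Qalg k) (coeff (mymono 2 2) p) * (qx k ^ 2 * qy k ^ 2) := by
      conv_lhs => rw [← hp]
      rw [trunc k p, Finset.sum_product]
      simp only [Finset.sum_range_succ, Finset.sum_range_zero, zero_add]
      ring
    rw [h9]
  have tfix : t ↑a = ↑a := a.2
  have hta : t ↑a =
      algebraMap k (Qalg k) (c 0 0) * ((qx k ^ 2 + 2 * qx k) ^ 0 * (qy k ^ 2 + 2 * qy k) ^ 0)
      + algebraMap k (Qalg k) (c 0 1) * ((qx k ^ 2 + 2 * qx k) ^ 0 * (qy k ^ 2 + 2 * qy k) ^ 1)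
      + algebraMap k (Qalg k) (c 0 2) * ((qx k ^ 2 + 2 * qx k) ^ 0 * (qy k ^ 2 + 2 * qy k) ^ 2)
      + algebraMap k (Qalg k) (c 1 0) * ((qx k ^ 2 + 2 * qx k) ^ 1 * (qy k ^ 2 + 2 * qy k) ^ 0)
      + algebraMap k (Qalg k) (c 1 1) * ((qx k ^ 2 + 2 * qx k) ^ 1 * (qy k ^ 2 + 2 * qy k) ^ 1)
      + algebraMap k (Qalg k) (c 1 2) * ((qx k ^ 2 + 2 * qx k) ^ 1 * (qy k ^ 2 + 2 * qy k) ^ 2)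
      + algebraMap k (Qalg k) (c 2 0) * ((qx k ^ 2 + 2 * qx k) ^ 2 * (qy k ^ 2 + 2 * qy k) ^ 0)
      + algebraMap k (Qalg k) (c 2 1) * ((qx k ^ 2 + 2 * qx k) ^ 2 * (qy k ^ 2 + 2 * qy k) ^ 1)
      + algebraMap k (Qalg k) (c 2 2) * ((qx k ^ 2 + 2 * qx k) ^ 2 * (qy k ^ 2 + 2 * qy k) ^ 2) := by
    conv_lhs => rw [hdec]
    simp only [map_add, map_mul, map_pow, ht0, ht1, AlgHom.commutes]
  have heq := hta.symm.trans (tfix.trans hdec)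
  have Hn : algebraMap k (Qalg k) (c 1 0) * (qx k ^ 1 * qy k ^ 0)
      + algebraMap k (Qalg k) (c 0 1) * (qx k ^ 0 * qy k ^ 1)
      + algebraMap k (Qalg k) (c 1 0) * (qx k ^ 2 * qy k ^ 0)
      + algebraMap k (Qalg k) (c 0 1) * (qx k ^ 0 * qy k ^ 2)
      + algebraMap k (Qalg k) (2 * c 1 1 + c 2 1) * (qx k ^ 2 * qy k ^ 1)
      + algebraMap k (Qalg k) (2 * c 1 1 + c 1 2) * (qx k ^ 1 * qy k ^ 2)
      + algebraMap k (Qalg k) (c 1 1 + c 2 1 + c 1 2) * (qx k ^ 2 * qy k ^ 2) = 0 := by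
    simp only [map_add, map_mul, map_ofNat]
    linear_combination heq - (algebraMap k (Qalg k) (c 2 0) * (qx k + 4) + algebraMap k (Qalg k) (c 2 1) * (qx k * qy k ^ 2 + 2 * qx k * qy k + 4 * qy k ^ 2 + 8 * qy k) + algebraMap k (Qalg k) (c 2 2) * (qx k * qy k ^ 4 + 4 * qx k * qy k ^ 3 + 4 * qx k * qy k ^ 2 + 4 * qy k ^ 4 + 16 * qy k ^ 3 + 16 * qy k ^ 2)) * hx3 - (algebraMap k (Qalg k) (c 0 2) * (qy k + 4) + algebraMap k (Qalg k) (c 1 2) * (qx k ^ 2 * qy k + 4 * qx k ^ 2 + 2 * qx k * qy k + 8 * qx k) + algebraMap k (Qalg k) (c 2 2) * (4 * qx k ^ 2 * qy k + 16 * qx k ^ 2)) * hy3 - (algebraMap k (Qalg k) (c 0 2) * qy k ^ 2 + algebraMap k (Qalg k) (c 2 0) * qx k ^ 2 + algebraMap k (Qalg k) (c 1 1) * qx k * qy k + algebraMap k (Qalg k) (c 1 2) * (qx k ^ 2 * qy k ^ 2 + 2 * qx k * qy k ^ 2) + algebraMap k (Qalg k) (c 2 1) * (qx k ^ 2 * qy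 k ^ 2 + 2 * qx k ^ 2 * qy k) + algebraMap k (Qalg k) (c 2 2) * (5 * qx k ^ 2 * qy k ^ 2)) * h3Q
  have E10 : c 1 0 = 0 := by
    have h := congrArg (cQ k 1 0 (by norm_num) (by norm_num)) Hn
    simp only [LinearMap.map_add, cQ_amul, cQ_basis] at h
    norm_num at h
    linear_combination h
  have E01 : c 0 1 = 0 := by
    have h := congrArg (cQ k 0 1 (by norm_num) (by norm_num)) Hn
    simp only [LinearMap.map_add, cQ_amul, cQ_basis] at h
    norm_num at h
    linear_combination h
  have E21 : 2 * c 1 1 + c 2 1 = 0 := by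
    have h := congrArg (cQ k 2 1 (by norm_num) (by norm_num)) Hn
    simp only [LinearMap.map_add, cQ_amul, cQ_basis] at h
    norm_num at h
    linear_combination h
  have E12 : 2 * c 1 1 + c 1 2 = 0 := by
    have h := congrArg (cQ k 1 2 (by norm_num) (by norm_num)) Hn
    simp only [LinearMap.map_add, cQ_amul, cQ_basis] at h
    norm_num at h
    linear_combination h
  have hc21 : c 2 1 = c 1 1 := by linear_combination E21 - c 1 1 * h3k
  have hc12 : c 1 2 = c 1 1 := by linear_combination E12 - c 1 1 * h3k
  have g10 : algebraMap k (Qalg k) (c 1 0) = 0 := by rw [E10, map_zero]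
  have g01 : algebraMap k (Qalg k) (c 0 1) = 0 := by rw [E01, map_zero]
  have g21 : algebraMap k (Qalg k) (c 2 1) = algebraMap k (Qalg k) (c 1 1) := by rw [hc21]
  have g12 : algebraMap k (Qalg k) (c 1 2) = algebraMap k (Qalg k) (c 1 1) := by rw [hc12]
  have hdec5 : (a : Qalg k) = algebraMap k (Qalg k) (c 0 0) * 1 + algebraMap k (Qalg k) (c 2 0) * (qx k ^ 2)
      + algebraMap k (Qalg k) (c 0 2) * (qy k ^ 2) + algebraMap k (Qalg k) (c 1 1) * (qx k * qy k + qx k ^ 2 * qy k + qx k * qy k ^ 2) + algebraMap k (Qalg k) (c 2 2) * (qx k ^ 2 * qy k ^ 2) := by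
    linear_combination hdec + qx k * g10 + qy k * g01
      + qx k ^ 2 * qy k * g21 + qx k * qy k ^ 2 * g12
  have hsm : ∀ (d : k) (v : Qalg k), d • v = algebraMap k (Qalg k) d * v :=
    fun d v => Algebra.smul_def d v
  set u2 : ↥(Req k t) := (⟨qx k ^ 2, hx2⟩ : ↥(Req k t)) with hu2
  set u3 : ↥(Req k t) := (⟨qy k ^ 2, hy2⟩ : ↥(Req k t)) with hu3
  set u4 : ↥(Req k t) := (⟨qx k * qy k + qx k ^ 2 * qy k + qx k * qy k ^ 2, hmix⟩ : ↥(Req k t)) with hu4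
  set u5 : ↥(Req k t) := (⟨qx k ^ 2 * qy k ^ 2, hx2y2⟩ : ↥(Req k t)) with hu5
  have haR : a = c 0 0 • (1 : ↥(Req k t)) + c 2 0 • u2 + c 0 2 • u3 + c 1 1 • u4 + c 2 2 • u5 := by
    apply Subtype.ext
    simp only [Subalgebra.coe_add, Subalgebra.coe_smul, OneMemClass.coe_one, hu2, hu3, hu4, hu5]
    simp only [hsm]
    linear_combination hdec5
  have hm4 : a * u4 = c 0 0 • u4 + c 1 1 • u5 := by
    apply Subtype.ext
    simp only [Subalgebra.coe_mul, Subalgebra.coe_add, Subalgebra.coe_smul, hu2, hu3, hu4, hu5]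
    simp only [hsm]
    rw [hdec5]
    linear_combination (algebraMap k (Qalg k) (c 2 0) * (qy k + qx k * qy k + qy k ^ 2) + algebraMap k (Qalg k) (c 1 1) * (qx k * qy k ^ 2 + 2 * qy k ^ 2 + 2 * qy k ^ 3) + algebraMap k (Qalg k) (c 2 2) * (qy k ^ 3 + qx k * qy k ^ 3 + qy k ^ 4)) * hx3 + (algebraMap k (Qalg k) (c 0 2) * (qx k + qx k ^ 2 + qx k * qy k) + algebraMap k (Qalg k) (c 1 1) * (qx k ^ 2 * qy k + 2 * qx k ^ 2)) * hy3
  have hm5 : a * u5 = c 0 0 • u5 := by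
    apply Subtype.ext
    simp only [Subalgebra.coe_mul, Subalgebra.coe_add, Subalgebra.coe_smul, hu2, hu3, hu4, hu5]
    simp only [hsm]
    rw [hdec5]
    linear_combination (algebraMap k (Qalg k) (c 2 0) * (qx k * qy k ^ 2) + algebraMap k (Qalg k) (c 1 1) * (qy k ^ 3 + qx k * qy k ^ 3 + qy k ^ 4) + algebraMap k (Qalg k) (c 2 2) * (qx k * qy k ^ 4)) * hx3 + (algebraMap k (Qalg k) (c 0 2) * (qx k ^ 2 * qy k)) * hy3
  have hm2 : a * u2 = c 0 0 • u2 + c 0 2 • u5 := by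
    apply Subtype.ext
    simp only [Subalgebra.coe_mul, Subalgebra.coe_add, Subalgebra.coe_smul, hu2, hu3, hu4, hu5]
    simp only [hsm]
    rw [hdec5]
    linear_combination (algebraMap k (Qalg k) (c 2 0) * qx k + algebraMap k (Qalg k) (c 1 1) * (qy k + qx k * qy k + qy k ^ 2) + algebraMap k (Qalg k) (c 2 2) * (qx k * qy k ^ 2)) * hx3
  have hm3 : a * u3 = c 0 0 • u3 + c 2 0 • u5 := by
    apply Subtype.ext
    simp only [Subalgebra.coe_mul, Subalgebra.coe_add, Subalgebra.coe_smul, hu2, hu3, hu4, hu5]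
    simp only [hsm]
    rw [hdec5]
    linear_combination (algebraMap k (Qalg k) (c 0 2) * qy k + algebraMap k (Qalg k) (c 1 1) * (qx k + qx k ^ 2 + qx k * qy k) + algebraMap k (Qalg k) (c 2 2) * (qx k ^ 2 * qy k)) * hy3
  have z11 : c 1 1 = 0 := by
    have h := hI (a * u4) (Ideal.mul_mem_right u4 I ha)
    rw [hm4] at h
    simp only [map_add, map_smul, h5, h1, smul_eq_mul, mul_zero, mul_one, zero_add] at h
    exact h
  have z00 : c 0 0 = 0 := by
    have h := hI (a * u5) (Ideal.mul_mem_right u5 I ha)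
    rw [hm5] at h
    simp only [map_smul, h1, smul_eq_mul, mul_one] at h
    exact h
  have z02 : c 0 2 = 0 := by
    have h := hI (a * u2) (Ideal.mul_mem_right u2 I ha)
    rw [hm2] at h
    simp only [map_add, map_smul, h3, h1, smul_eq_mul, mul_zero, mul_one, zero_add] at h
    exact h
  have z20 : c 2 0 = 0 := by
    have h := hI (a * u3) (Ideal.mul_mem_right u3 I ha)
    rw [hm3] at h
    simp only [map_add, map_smul, h4, h1, smul_eq_mul, mul_zero, mul_one, zero_add] at h
    exact h
  have z22 : c 2 2 = 0 := by
    have h := hI a ha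
    rw [haR] at h
    simp only [map_add, map_smul, h1, h2, h3, h4, h5, smul_eq_mul, mul_zero, mul_one,
      zero_add, add_zero] at h
    exact h
  rw [haR, z00, z20, z02, z11, z22]
  simp


set_option synthInstance.maxHeartbeats 1000000 in
set_option maxHeartbeats 2000000 in
/-- In characteristic `3`, the fixed-point algebra `R = (k[x,y]/(x³,y³))^{C₂}` (with the
inversion-type action `x ↦ x² + 2x`, `y ↦ y² + 2y`) is a symmetric `k`-algebra: the
linear form `s` with `s(x²y²) = 1` and `s = 0` on the other basis elements
`{1, x², y², xy + x²y + xy²}` has kernel containing no nonzero ideal of `R`. -/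
theorem stmt_16 [CharP k 3] (t : Qalg k →ₐ[k] Qalg k)
    (ht0 : t (qx k) = qx k ^ 2 + 2 * qx k) (ht1 : t (qy k) = qy k ^ 2 + 2 * qy k)
    (hx2 : qx k ^ 2 ∈ Req k t) (hy2 : qy k ^ 2 ∈ Req k t)
    (hmix : qx k * qy k + qx k ^ 2 * qy k + qx k * qy k ^ 2 ∈ Req k t)
    (hx2y2 : qx k ^ 2 * qy k ^ 2 ∈ Req k t)
    (s : ↥(Req k t) →ₗ[k] k)
    (h1 : s (⟨qx k ^ 2 * qy k ^ 2, hx2y2⟩ : ↥(Req k t)) = 1)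
    (h2 : s 1 = 0)
    (h3 : s (⟨qx k ^ 2, hx2⟩ : ↥(Req k t)) = 0)
    (h4 : s (⟨qy k ^ 2, hy2⟩ : ↥(Req k t)) = 0)
    (h5 : s (⟨qx k * qy k + qx k ^ 2 * qy k + qx k * qy k ^ 2, hmix⟩ : ↥(Req k t)) = 0) :
    ∀ I : Ideal ↥(Req k t), (∀ a ∈ I, s a = 0) → I = ⊥ :=
  stmt16_aux k t ht0 ht1 hx2 hy2 hmix hx2y2 s h1 h2 h3 h4 h5
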